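/- arXiv:2302.04674 — 3 statements merged into one kernel-verified Lean document; each statement's English description precedes it below -/
import Mathlib

section
/- For any x : ℕ_{a+1-n} → ℝ, α ∈ (n-1,n), n ∈ ℤ₊, k ∈ ℕ_{a+1}, and w : ℕ_{a+1} → ℝ∖{0}, one has {}_a^R∇_k^{α,w(k)} {}_a^G∇_k^{-α,w(k)} x(k) = x(k) and {}_a^C∇_k^{α,w(k)} {}_a^G∇_k^{-α,w(k)} x(k) = x(k); that is, applying the tempered fractional sum of order α followed by the Riemann–Liouville or Caputo tempered fractional difference of order α recovers x. -/
open Real Finset Filter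

noncomputable def rising (p q : ℝ) : ℝ := Real.Gamma (p + q) / Real.Gamma p

noncomputable def gbinom (p : ℝ) (i : ℕ) : ℝ :=
  Real.Gamma (p + 1) / (Real.Gamma ((i : ℝ) + 1) * Real.Gamma (p - (i : ℝ) + 1))

noncomputable def nabla (n : ℕ) (z : ℤ → ℝ) (k : ℤ) : ℝ :=
  ∑ i ∈ Finset.range (n + 1), (-1 : ℝ) ^ i * (n.choose i : ℝ) * z (k - (i : ℤ))

noncomputable def glSum (a : ℤ) (β : ℝ) (z : ℤ → ℝ) (k : ℤ) : ℝ :=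
  ∑ i ∈ Finset.Icc (a + 1) k, rising ((k : ℝ) - (i : ℝ) + 1) (-β - 1) / Real.Gamma (-β) * z i

noncomputable def rl (a : ℤ) (α : ℝ) (n : ℕ) (z : ℤ → ℝ) (k : ℤ) : ℝ :=
  nabla n (fun j => glSum a (α - (n : ℝ)) z j) k

noncomputable def caputo (a : ℤ) (α : ℝ) (n : ℕ) (z : ℤ → ℝ) (k : ℤ) : ℝ :=
  glSum a (α - (n : ℝ)) (fun j => nabla n z j) k

noncomputable def nablaT (w : ℤ → ℝ) (n : ℕ) (x : ℤ → ℝ) (k : ℤ) : ℝ :=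
  (w k)⁻¹ * nabla n (fun j => w j * x j) k

noncomputable def glSumT (w : ℤ → ℝ) (a : ℤ) (β : ℝ) (x : ℤ → ℝ) (k : ℤ) : ℝ :=
  (w k)⁻¹ * glSum a β (fun j => w j * x j) k

noncomputable def rlT (w : ℤ → ℝ) (a : ℤ) (α : ℝ) (n : ℕ) (x : ℤ → ℝ) (k : ℤ) : ℝ :=
  (w k)⁻¹ * rl a α n (fun j => w j * x j) k

noncomputable def caputoT (w : ℤ → ℝ) (a : ℤ) (α : ℝ) (n : ℕ) (x : ℤ → ℝ) (k : ℤ) : ℝ :=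
  (w k)⁻¹ * caputo a α n (fun j => w j * x j) k

noncomputable def glBin (a : ℤ) (α : ℝ) (z : ℤ → ℝ) (k : ℤ) : ℝ :=
  ∑ i ∈ Finset.range (k - a).toNat, (-1 : ℝ) ^ i * gbinom α i * z (k - (i : ℤ))

noncomputable def risingZ (p : ℤ) (i : ℕ) : ℝ := ∏ m ∈ Finset.range i, ((p : ℝ) + (m : ℝ))

noncomputable def glLam (a : ℤ) (α lam : ℝ) (x : ℤ → ℝ) (k : ℤ) : ℝ :=
  (1 - lam) ^ (a - k) * glSum a α (fun j => (1 - lam) ^ (j - a) * x j) k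

noncomputable def qq (s : ℝ) (m : ℕ) : ℝ := ∏ i ∈ Finset.range m, (s + i)

lemma qq_succ (s : ℝ) (m : ℕ) : qq s (m+1) = qq s m * (s + m) := Finset.prod_range_succ _ _

lemma qq_zero (s : ℝ) : qq s 0 = 1 := Finset.prod_range_zero _

lemma qq_vandermonde (s t : ℝ) (m : ℕ) :
    ∑ l ∈ Finset.range (m+1), (m.choose l : ℝ) * (qq s l * qq t (m-l)) = qq (s+t) m := by
  induction m with
  | zero => simp [qq]
  | succ m ih =>
    have key : ∀ l ∈ Finset.range (m+1),
        (m.choose l : ℝ) * (qq s l * qq t (m-l)) * ((s+t) + m)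
        = (m.choose l : ℝ) * (qq s (l+1) * qq t (m-l))
          + (m.choose l : ℝ) * (qq s l * qq t (m-l+1)) := by
      intro l hl
      have hl' : l ≤ m := Nat.lt_succ_iff.mp (Finset.mem_range.mp hl)
      have hc : ((m - l : ℕ) : ℝ) = (m : ℝ) - l := by
        rw [Nat.cast_sub hl']
      rw [qq_succ, qq_succ, hc]; ring
    have step : qq (s+t) (m+1) =
        ∑ l ∈ Finset.range (m+1), ((m.choose l : ℝ) * (qq s (l+1) * qq t (m-l))
          + (m.choose l : ℝ) * (qq s l * qq t (m-l+1))) := by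
      rw [qq_succ, ← ih, Finset.sum_mul]
      push_cast
      exact Finset.sum_congr rfl key
    rw [step, Finset.sum_add_distrib]
    -- target: = ∑ l in range (m+2), C(m+1,l) qq s l qq t (m+1-l)
    rw [Finset.sum_range_succ' (fun l => ((m+1).choose l : ℝ) * (qq s l * qq t (m+1-l))) (m+1)]
    have e1 : ∀ i ∈ Finset.range (m+1),
        ((m+1).choose (i+1) : ℝ) * (qq s (i+1) * qq t (m+1-(i+1)))
        = (m.choose i : ℝ) * (qq s (i+1) * qq t (m-i))
          + (m.choose (i+1) : ℝ) * (qq s (i+1) * qq t (m-i)) := by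
      intro i hi
      have : (m+1-(i+1)) = m - i := by omega
      rw [this, Nat.choose_succ_succ]
      push_cast; ring
    rw [Finset.sum_congr rfl e1, Finset.sum_add_distrib]
    have e2 : ∑ i ∈ Finset.range (m+1), (m.choose (i+1) : ℝ) * (qq s (i+1) * qq t (m-i))
        + ((m+1).choose 0 : ℝ) * (qq s 0 * qq t (m+1-0))
        = ∑ l ∈ Finset.range (m+1), (m.choose l : ℝ) * (qq s l * qq t (m-l+1)) := by
      rw [Finset.sum_range_succ' (fun l => (m.choose l : ℝ) * (qq s l * qq t (m-l+1))) m,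
        Finset.sum_range_succ]
      simp only [Nat.choose_succ_self, Nat.cast_zero, zero_mul, add_zero]
      congr 1
      · apply Finset.sum_congr rfl
        intro i hi
        have hi' : i < m := Finset.mem_range.mp hi
        have : m - (i+1) + 1 = m - i := by omega
        rw [this]
      · simp
    rw [add_assoc, e2]

noncomputable def pp (s : ℝ) (m : ℕ) : ℝ := qq s m / m.factorial

lemma pp_vandermonde (s t : ℝ) (m : ℕ) :
    ∑ l ∈ Finset.range (m+1), pp s l * pp t (m-l) = pp (s+t) m := by
  rw [pp, ← qq_vandermonde s t m, Finset.sum_div]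
  apply Finset.sum_congr rfl
  intro l hl
  have hl' : l ≤ m := Nat.lt_succ_iff.mp (Finset.mem_range.mp hl)
  have hfac : (m.choose l : ℝ) * l.factorial * (m-l).factorial = m.factorial := by
    exact_mod_cast congrArg (Nat.cast : ℕ → ℝ) (Nat.choose_mul_factorial_mul_factorial hl')
  rw [pp, pp]
  field_simp
  rw [← hfac]; ring

noncomputable def U (a : ℤ) (s : ℝ) (z : ℤ → ℝ) (k : ℤ) : ℝ :=
  ∑ i ∈ Finset.Icc (a+1) k, pp s (k-i).toNat * z i

lemma U_of_le {a : ℤ} {k : ℤ} (h : k ≤ a) (s : ℝ) (z : ℤ → ℝ) : U a s z k = 0 := by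
  rw [U, Finset.Icc_eq_empty (by omega), Finset.sum_empty]

lemma sum_Icc_Icc_comm (A k : ℤ) (f : ℤ → ℤ → ℝ) :
    ∑ j ∈ Finset.Icc A k, ∑ i ∈ Finset.Icc A j, f j i
      = ∑ i ∈ Finset.Icc A k, ∑ j ∈ Finset.Icc i k, f j i := by
  rw [Finset.sum_sigma', Finset.sum_sigma']
  refine Finset.sum_nbij' (fun x => ⟨x.2, x.1⟩) (fun x => ⟨x.2, x.1⟩) ?_ ?_
    (fun _ _ => rfl) (fun _ _ => rfl) (fun _ _ => rfl) <;>
  · simp only [Finset.mem_Icc, Sigma.forall, Finset.mem_sigma]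
    omega

lemma U_comp (a : ℤ) (s t : ℝ) (z : ℤ → ℝ) (k : ℤ) :
    U a s (fun j => U a t z j) k = U a (s+t) z k := by
  rw [U]
  simp only [U, Finset.mul_sum]
  rw [sum_Icc_Icc_comm (a+1) k (fun j i => pp s (k-j).toNat * (pp t (j-i).toNat * z i))]
  apply Finset.sum_congr rfl
  intro i hi
  have hi' := Finset.mem_Icc.mp hi
  rw [show ∀ c : ℝ, (∑ j ∈ Finset.Icc i k, pp s (k-j).toNat * (pp t (j-i).toNat * c))
      = (∑ j ∈ Finset.Icc i k, pp s (k-j).toNat * pp t (j-i).toNat) * c from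
    fun c => by rw [Finset.sum_mul]; exact Finset.sum_congr rfl fun _ _ => by ring]
  congr 1
  -- reindex j = i + l
  have hre : ∑ j ∈ Finset.Icc i k, pp s (k-j).toNat * pp t (j-i).toNat
      = ∑ l ∈ Finset.range ((k-i).toNat + 1), pp t l * pp s ((k-i).toNat - l) := by
    refine Finset.sum_nbij' (fun j => (j - i).toNat) (fun l => i + (l : ℤ)) ?_ ?_ ?_ ?_ ?_
    · intro j hj; have := Finset.mem_Icc.mp hj
      simp only [Finset.mem_range]; omega
    · intro l hl; have := Finset.mem_range.mp hl
      simp only [Finset.mem_Icc]; omega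
    · intro j hj; have := Finset.mem_Icc.mp hj; omega
    · intro l hl; have := Finset.mem_range.mp hl; omega
    · intro j hj; have := Finset.mem_Icc.mp hj
      have h1 : (k - j).toNat = (k-i).toNat - (j-i).toNat := by omega
      rw [h1, mul_comm]
  rw [hre, pp_vandermonde t s ((k-i).toNat), add_comm t s]

lemma Gamma_shift (s : ℝ) (hs : 0 < s) (m : ℕ) :
    Real.Gamma ((m : ℝ) + s) = qq s m * Real.Gamma s := by
  induction m with
  | zero => simp [qq_zero]
  | succ m ih =>
    have h1 : ((m+1 : ℕ) : ℝ) + s = ((m : ℝ) + s) + 1 := by push_cast; ring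
    have h2 : (m : ℝ) + s ≠ 0 := by positivity
    rw [h1, Real.Gamma_add_one h2, ih, qq_succ]
    ring

lemma glSum_eq_U (a : ℤ) (s : ℝ) (hs : 0 < s) (z : ℤ → ℝ) (k : ℤ) :
    glSum a (-s) z k = U a s z k := by
  rw [glSum, U]
  apply Finset.sum_congr rfl
  intro i hi
  have hi' := Finset.mem_Icc.mp hi
  congr 1
  set m := (k - i).toNat with hm
  have hcast : (k : ℝ) - (i : ℝ) = (m : ℝ) := by
    have : ((k - i : ℤ) : ℝ) = ((m : ℕ) : ℝ) := by
      rw [hm]; norm_cast; omega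
    push_cast at this ⊢; linarith
  have hΓs : Real.Gamma s ≠ 0 := (Real.Gamma_pos_of_pos hs).ne'
  have hnum : (k : ℝ) - (i : ℝ) + 1 + (-(-s) - 1) = (m : ℝ) + s := by
    rw [hcast]; ring
  rw [rising, hnum, Gamma_shift s hs m, hcast]
  rw [show ((m:ℝ) + 1) = ((m:ℕ):ℝ) + 1 from rfl, Real.Gamma_nat_eq_factorial]
  rw [neg_neg, pp]
  field_simp

lemma qq_neg_nat (n : ℕ) (m : ℕ) :
    qq (-(n : ℝ)) m = (-1)^m * (n.descFactorial m : ℝ) := by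
  induction m with
  | zero => simp [qq_zero]
  | succ m ih =>
    rw [qq_succ, ih, Nat.descFactorial_succ]
    rcases lt_or_ge m n with h | h
    · have : ((n - m : ℕ) : ℝ) = (n : ℝ) - m := by
        rw [Nat.cast_sub h.le]
      rw [Nat.cast_mul, this]
      ring
    · have hnm : ((n - m : ℕ) : ℝ) = 0 := by norm_cast; omega
      rw [Nat.cast_mul, hnm]
      rcases eq_or_lt_of_le h with h' | h'
      · have hz : -(n:ℝ) + m = 0 := by rw [h']; ring
        rw [hz, mul_zero]; ring
      · have hd : (n.descFactorial m : ℝ) = 0 := by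
          exact_mod_cast congrArg (Nat.cast : ℕ → ℝ) (Nat.descFactorial_eq_zero_iff_lt.mpr h')
        rw [hd]; ring

lemma pp_neg_nat (n : ℕ) (m : ℕ) :
    pp (-(n : ℝ)) m = (-1)^m * (n.choose m : ℝ) := by
  rw [pp, qq_neg_nat, Nat.descFactorial_eq_factorial_mul_choose]
  have : (m.factorial : ℝ) ≠ 0 := by exact_mod_cast m.factorial_ne_zero
  push_cast
  field_simp

lemma pp_neg_nat_zero {n m : ℕ} (h : n < m) : pp (-(n : ℝ)) m = 0 := by
  rw [pp_neg_nat, Nat.choose_eq_zero_of_lt h]; simp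

lemma nabla_eq_U (a : ℤ) (n : ℕ) (F : ℤ → ℝ) (hF : ∀ j, j ≤ a → F j = 0) (k : ℤ) :
    nabla n F k = U a (-(n : ℝ)) F k := by
  have h1 : nabla n F k = ∑ j ∈ Finset.Icc (k - n) k, pp (-(n:ℝ)) (k-j).toNat * F j := by
    rw [nabla]
    refine Finset.sum_nbij' (fun i => k - (i : ℤ)) (fun j => (k - j).toNat) ?_ ?_ ?_ ?_ ?_
    · intro i hi; have := Finset.mem_range.mp hi
      simp only [Finset.mem_Icc]; omega
    · intro j hj; have := Finset.mem_Icc.mp hj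
      simp only [Finset.mem_range]; omega
    · intro i hi; have := Finset.mem_range.mp hi; omega
    · intro j hj; have := Finset.mem_Icc.mp hj; omega
    · intro i hi; have hi' := Finset.mem_range.mp hi
      have : (k - (k - (i:ℤ))).toNat = i := by omega
      rw [this, pp_neg_nat]
  have hdisj : ∀ A B C : ℤ, Disjoint (Finset.Ioc A B) (Finset.Ioc B C) := by
    intro A B C
    apply Finset.disjoint_left.mpr
    intro x hx hx'
    have h1 := Finset.mem_Ioc.mp hx
    have h2 := Finset.mem_Ioc.mp hx'
    omega
  have hIoc : ∀ A B : ℤ, Finset.Icc (A+1) B = Finset.Ioc A B := by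
    intro A B; ext j; simp only [Finset.mem_Icc, Finset.mem_Ioc]; omega
  have hIcc2 : Finset.Icc (k - n) k = Finset.Ioc (k - n - 1) k := by
    ext j; simp only [Finset.mem_Icc, Finset.mem_Ioc]; omega
  rw [h1, U, hIoc, hIcc2]
  set g : ℤ → ℝ := fun j => pp (-(n:ℝ)) (k-j).toNat * F j with hg
  have hgF : ∀ j, j ≤ a → g j = 0 := by
    intro j hj; rw [hg]; simp only []; rw [hF j hj, mul_zero]
  have hgp : ∀ j, j ≤ k - (n:ℤ) - 1 → g j = 0 := by
    intro j hj; rw [hg]; simp only []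
    rw [pp_neg_nat_zero (by omega : n < (k-j).toNat), zero_mul]
  rcases le_total a (k - (n:ℤ) - 1) with h | h
  · rw [← Finset.Ioc_union_Ioc_eq_Ioc h (by omega : k - (n:ℤ) - 1 ≤ k),
      Finset.sum_union (hdisj _ _ _)]
    rw [Finset.sum_eq_zero (fun j hj => hgp j (Finset.mem_Ioc.mp hj).2), zero_add]
  · rcases le_total a k with hak | hak
    · rw [← Finset.Ioc_union_Ioc_eq_Ioc h hak, Finset.sum_union (hdisj _ _ _)]
      rw [Finset.sum_eq_zero (fun j hj => hgF j (Finset.mem_Ioc.mp hj).2), zero_add]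
    · rw [Finset.Ioc_eq_empty (by omega : ¬ a < k), Finset.sum_empty]
      exact Finset.sum_eq_zero (fun j hj => hgF j (by
        have := Finset.mem_Ioc.mp hj; omega))

lemma U_zero (a : ℤ) (z : ℤ → ℝ) (k : ℤ) (hk : a + 1 ≤ k) : U a 0 z k = z k := by
  rw [U, Finset.sum_eq_single k]
  · have : (k - k).toNat = 0 := by omega
    rw [this, pp, qq_zero]; simp
  · intro i hi hne
    have := Finset.mem_Icc.mp hi
    have hm : 0 < (k - i).toNat := by omega
    have hq : qq 0 (k-i).toNat = 0 := by
      rw [qq]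
      apply Finset.prod_eq_zero (Finset.mem_range.mpr hm)
      simp
    rw [pp, hq]; simp
  · intro h; exact absurd (Finset.mem_Icc.mpr ⟨hk, le_refl k⟩) h

theorem stmt6 (a : ℤ) (n : ℕ) (hn : 0 < n) (α : ℝ) (hα1 : (n : ℝ) - 1 < α)
    (hα2 : α < n) (w x : ℤ → ℝ) (hw : ∀ k, a + 1 ≤ k → w k ≠ 0)
    (k : ℤ) (hk : a + 1 ≤ k) :
    rlT w a α n (fun j => glSumT w a (-α) x j) k = x k
      ∧ caputoT w a α n (fun j => glSumT w a (-α) x j) k = x k := by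
  have hα0 : 0 < α := by
    have h1 : (1:ℝ) ≤ (n:ℝ) := by exact_mod_cast hn
    linarith
  have hnα : 0 < (n:ℝ) - α := by linarith
  have hfun : ∀ j, w j * glSumT w a (-α) x j = U a α (fun i => w i * x i) j := by
    intro j
    rw [glSumT, ← glSum_eq_U a α hα0]
    by_cases hj : a + 1 ≤ j
    · rw [← mul_assoc, mul_inv_cancel₀ (hw j hj), one_mul]
    · rw [glSum, Finset.Icc_eq_empty (by omega), Finset.sum_empty, mul_zero, mul_zero]
  constructor
  · simp only [rlT, rl]
    simp only [hfun]
    have e1 : (fun j => glSum a (α - (n:ℝ)) (fun j' => U a α (fun i => w i * x i) j') j)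
        = fun j => U a ((n:ℝ)) (fun i => w i * x i) j := by
      funext j
      rw [show α - (n:ℝ) = -((n:ℝ) - α) by ring, glSum_eq_U a ((n:ℝ) - α) hnα, U_comp]
      rw [show (n:ℝ) - α + α = (n:ℝ) by ring]
    rw [e1, nabla_eq_U a n _ (fun j hj => U_of_le hj _ _) k, U_comp,
      show -(n:ℝ) + (n:ℝ) = 0 by ring, U_zero a _ k hk, ← mul_assoc,
      inv_mul_cancel₀ (hw k hk), one_mul]
  · simp only [caputoT, caputo]
    simp only [hfun]
    have e2 : (fun j => nabla n (fun j' => U a α (fun i => w i * x i) j') j)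
        = fun j => U a (α - (n:ℝ)) (fun i => w i * x i) j := by
      funext j
      rw [nabla_eq_U a n _ (fun j' hj' => U_of_le hj' _ _) j, U_comp,
        show -(n:ℝ) + α = α - (n:ℝ) by ring]
    rw [e2, show α - (n:ℝ) = -((n:ℝ) - α) by ring,
      glSum_eq_U a ((n:ℝ) - α) hnα, U_comp,
      show (n:ℝ) - α + -((n:ℝ) - α) = 0 by ring, U_zero a _ k hk, ← mul_assoc,
      inv_mul_cancel₀ (hw k hk), one_mul]
end

section
/- For any x : ℕ_{a+1-n} → ℝ, n ∈ ℤ₊, α ∈ (n-1,n), k ∈ ℕ_{a+1} fixed, and w : ℕ_{a+1} → ℝ∖{0}, the Caputo tempered fractional difference satisfies lim_{α→n⁻} {}_a^C∇_k^{α,w(k)} x(k) = ∇^{n,w(k)} x(k). -/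
open Real Finset Filter

lemma aux_coeff_zero (c : ℝ) (hc : 1 ≤ c) :
    Filter.Tendsto (fun s : ℝ => rising (c + 1) (s - 1) / Real.Gamma s)
      (nhdsWithin 0 (Set.Ioo (0:ℝ) 1)) (nhds 0) := by
  have heq : (fun s : ℝ => rising (c + 1) (s - 1) / Real.Gamma s)
      =ᶠ[nhdsWithin (0:ℝ) (Set.Ioo (0:ℝ) 1)]
      (fun s : ℝ => Real.Gamma (c + s) / Real.Gamma (c + 1) * s / Real.Gamma (s + 1)) := by
    filter_upwards [self_mem_nhdsWithin] with s hs
    have hs0 : s ≠ 0 := ne_of_gt hs.1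
    have hadd : Real.Gamma (s + 1) = s * Real.Gamma s := Real.Gamma_add_one hs0
    have hΓs : Real.Gamma s ≠ 0 := ne_of_gt (Real.Gamma_pos_of_pos hs.1)
    have hΓc1 : Real.Gamma (c + 1) ≠ 0 := ne_of_gt (Real.Gamma_pos_of_pos (by linarith))
    have h1 : c + 1 + (s - 1) = c + s := by ring
    rw [rising, h1, hadd]
    field_simp
  refine Filter.Tendsto.congr' heq.symm ?_
  have hcne : ∀ m : ℕ, c ≠ -(m : ℝ) := by
    intro m h
    have : (0:ℝ) ≤ (m : ℝ) := Nat.cast_nonneg m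
    linarith
  have h1ne : ∀ m : ℕ, (1:ℝ) ≠ -(m : ℝ) := by
    intro m h
    have : (0:ℝ) ≤ (m : ℝ) := Nat.cast_nonneg m
    linarith
  have t1 : Filter.Tendsto (fun s : ℝ => Real.Gamma (c + s))
      (nhdsWithin 0 (Set.Ioo (0:ℝ) 1)) (nhds (Real.Gamma c)) := by
    have hg : ContinuousAt Real.Gamma (c + 0) := by
      simpa using (Real.differentiableAt_Gamma hcne).continuousAt
    have h2 : ContinuousAt (fun s : ℝ => c + s) 0 := continuousAt_const.add continuousAt_id
    have hcont := hg.comp (x := (0:ℝ)) h2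
    have := hcont.continuousWithinAt.tendsto (s := Set.Ioo (0:ℝ) 1)
    simpa [Function.comp_def] using this
  have t2 : Filter.Tendsto (fun s : ℝ => Real.Gamma (s + 1))
      (nhdsWithin 0 (Set.Ioo (0:ℝ) 1)) (nhds 1) := by
    have hg : ContinuousAt Real.Gamma ((0:ℝ) + 1) := by
      simpa using (Real.differentiableAt_Gamma h1ne).continuousAt
    have h2 : ContinuousAt (fun s : ℝ => s + 1) 0 := continuousAt_id.add continuousAt_const
    have hcont := hg.comp (x := (0:ℝ)) h2
    have := hcont.continuousWithinAt.tendsto (s := Set.Ioo (0:ℝ) 1)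
    simpa [Function.comp_def, Real.Gamma_one] using this
  have t3 : Filter.Tendsto (fun s : ℝ => s) (nhdsWithin 0 (Set.Ioo (0:ℝ) 1)) (nhds 0) :=
    tendsto_id.mono_left nhdsWithin_le_nhds
  have := (((t1.div_const (Real.Gamma (c + 1))).mul t3).div t2 one_ne_zero)
  simpa [Pi.div_def] using this

lemma aux_smap (n : ℕ) :
    Filter.Tendsto (fun α : ℝ => (n : ℝ) - α)
      (nhdsWithin (n : ℝ) (Set.Ioo ((n : ℝ) - 1) (n : ℝ)))
      (nhdsWithin 0 (Set.Ioo (0:ℝ) 1)) := by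
  apply tendsto_nhdsWithin_of_tendsto_nhds_of_eventually_within
  · have : Filter.Tendsto (fun α : ℝ => (n : ℝ) - α) (nhds (n : ℝ)) (nhds ((n:ℝ) - n)) :=
      tendsto_const_nhds.sub tendsto_id
    simpa using this.mono_left nhdsWithin_le_nhds
  · filter_upwards [self_mem_nhdsWithin] with α hα
    exact ⟨by linarith [hα.2], by linarith [hα.1]⟩

theorem stmt9 (a : ℤ) (n : ℕ) (hn : 0 < n) (w x : ℤ → ℝ)
    (hw : ∀ k, a + 1 ≤ k → w k ≠ 0) (k : ℤ) (hk : a + 1 ≤ k) :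
    Filter.Tendsto (fun α : ℝ => caputoT w a α n x k)
      (nhdsWithin (n : ℝ) (Set.Ioo ((n : ℝ) - 1) (n : ℝ)))
      (nhds (nablaT w n x k)) := by
  set z : ℤ → ℝ := fun j => w j * x j with hz
  have hkmem : k ∈ Finset.Icc (a + 1) k := Finset.mem_Icc.mpr ⟨hk, le_refl k⟩
  have key : ∀ i ∈ Finset.Icc (a + 1) k,
      Filter.Tendsto (fun α : ℝ =>
          rising ((k : ℝ) - (i : ℝ) + 1) (-(α - (n : ℝ)) - 1) / Real.Gamma (-(α - (n : ℝ)))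
            * nabla n z i)
        (nhdsWithin (n : ℝ) (Set.Ioo ((n : ℝ) - 1) (n : ℝ)))
        (nhds (if i = k then nabla n z k else 0)) := by
    intro i hi
    rcases eq_or_ne i k with rfl | hik
    · simp only [if_pos rfl]
      have heq : (fun α : ℝ => rising ((i : ℝ) - (i : ℝ) + 1) (-(α - (n : ℝ)) - 1)
            / Real.Gamma (-(α - (n : ℝ))) * nabla n z i)
          =ᶠ[nhdsWithin (n : ℝ) (Set.Ioo ((n : ℝ) - 1) (n : ℝ))]
          (fun _ : ℝ => nabla n z i) := by
        filter_upwards [self_mem_nhdsWithin] with α hα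
        have hs : (0:ℝ) < (n : ℝ) - α := by linarith [hα.2]
        have hΓ : Real.Gamma ((n : ℝ) - α) ≠ 0 := ne_of_gt (Real.Gamma_pos_of_pos hs)
        have h1 : (i : ℝ) - (i : ℝ) + 1 = 1 := by ring
        have h2 : -(α - (n : ℝ)) = (n : ℝ) - α := by ring
        have h3 : (1:ℝ) + (-(α - (n : ℝ)) - 1) = (n : ℝ) - α := by ring
        rw [rising, h1, h3, h2, Real.Gamma_one]
        field_simp
      exact Filter.Tendsto.congr' heq.symm tendsto_const_nhds
    · simp only [if_neg hik]
      have hilt : i < k := lt_of_le_of_ne (Finset.mem_Icc.mp hi).2 hik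
      set c : ℝ := (k : ℝ) - (i : ℝ) with hc
      have hc1 : 1 ≤ c := by
        have : (i : ℝ) + 1 ≤ (k : ℝ) := by exact_mod_cast hilt
        simp only [hc]; linarith
      have hz0 := (aux_coeff_zero c hc1).comp (aux_smap n)
      have heq : (fun α : ℝ =>
          rising ((k : ℝ) - (i : ℝ) + 1) (-(α - (n : ℝ)) - 1) / Real.Gamma (-(α - (n : ℝ))))
          = (fun s : ℝ => rising (c + 1) (s - 1) / Real.Gamma s) ∘ (fun α : ℝ => (n : ℝ) - α) := by
        funext α
        have h1 : (k : ℝ) - (i : ℝ) + 1 = c + 1 := by simp [hc]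
        have h2 : -(α - (n : ℝ)) - 1 = ((n : ℝ) - α) - 1 := by ring
        have h3 : -(α - (n : ℝ)) = (n : ℝ) - α := by ring
        simp [Function.comp, h1, h2, h3]
      rw [show (0:ℝ) = 0 * nabla n z i by ring] at *
      have := hz0.mul_const (nabla n z i)
      rw [← heq] at this
      simpa using this
  have hsum := tendsto_finset_sum (Finset.Icc (a + 1) k) key
  rw [Finset.sum_ite_eq' (Finset.Icc (a + 1) k) k (fun _ => nabla n z k), if_pos hkmem] at hsum
  have hfinal := hsum.const_mul ((w k)⁻¹)
  simp only [caputoT, caputo, glSum, nablaT]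
  convert hfinal using 2
end

section
/- Convolution commutes with the Grünwald–Letnikov tempered operator with exponential tempering: for α ∈ ℝ∖ℤ₊, λ ≠ 1, x, y : ℕ_{a+1} → ℝ, a ∈ ℤ, and k ∈ ℕ_{a+1}, ∑_{j=a+1}^k x(k+a+1-j) · {}_a^G∇_j^{α,λ} y(j) = ∑_{j=a+1}^k {}_a^G∇_j^{α,λ} x(j) · y(k+a+1-j), where {}_a^G∇_k^{α,λ} x(k) := (1-λ)^{a-k} · {}_a^G∇_k^α[(1-λ)^{k-a} x(k)]. -/
open Real Finset Filter

theorem stmt18 (a : ℤ) (α : ℝ) (hα : ¬ ∃ m : ℕ, 0 < m ∧ α = m)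
    (lam : ℝ) (hlam : lam ≠ 1) (x y : ℤ → ℝ) (k : ℤ) (hk : a + 1 ≤ k) :
    ∑ j ∈ Finset.Icc (a + 1) k, x (k + a + 1 - j) * glLam a α lam y j
      = ∑ j ∈ Finset.Icc (a + 1) k, glLam a α lam x j * y (k + a + 1 - j) := by
  have h1 : (1 - lam) ≠ 0 := sub_ne_zero.mpr (Ne.symm hlam)
  have key : ∀ (u v : ℤ → ℝ),
      ∑ j ∈ Finset.Icc (a + 1) k, u (k + a + 1 - j) * glLam a α lam v j
      = ∑ p ∈ (Finset.Icc (a + 1) k).sigma (fun j => Finset.Icc (a + 1) j),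
          u (k + a + 1 - p.1) *
            (rising ((p.1 : ℝ) - (p.2 : ℝ) + 1) (-α - 1) / Real.Gamma (-α) *
              ((1 - lam) ^ (p.2 - p.1) * v p.2)) := by
    intro u v
    rw [Finset.sum_sigma]
    apply Finset.sum_congr rfl
    intro j hj
    simp only [glLam, glSum, Finset.mul_sum]
    apply Finset.sum_congr rfl
    intro i hi
    have hz : (1 - lam) ^ (a - j) * (1 - lam) ^ (i - a) = (1 - lam) ^ (i - j) := by
      rw [← zpow_add₀ h1]; ring_nf
    rw [← hz]; ring
  rw [key x y]
  have key2 :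
      ∑ j ∈ Finset.Icc (a + 1) k, glLam a α lam x j * y (k + a + 1 - j)
      = ∑ p ∈ (Finset.Icc (a + 1) k).sigma (fun j => Finset.Icc (a + 1) j),
          (rising ((p.1 : ℝ) - (p.2 : ℝ) + 1) (-α - 1) / Real.Gamma (-α) *
              ((1 - lam) ^ (p.2 - p.1) * x p.2)) * y (k + a + 1 - p.1) := by
    rw [Finset.sum_sigma]
    apply Finset.sum_congr rfl
    intro j hj
    simp only [glLam, glSum, Finset.mul_sum, Finset.sum_mul]
    apply Finset.sum_congr rfl
    intro i hi
    have hz : (1 - lam) ^ (a - j) * (1 - lam) ^ (i - a) = (1 - lam) ^ (i - j) := by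
      rw [← zpow_add₀ h1]; ring_nf
    rw [← hz]; ring
  rw [key2]
  refine Finset.sum_nbij' (fun p => ⟨k + a + 1 - p.2, k + a + 1 - p.1⟩)
    (fun p => ⟨k + a + 1 - p.2, k + a + 1 - p.1⟩) ?_ ?_ ?_ ?_ ?_
  · rintro ⟨j, i⟩ hp
    simp only [Finset.mem_sigma, Finset.mem_Icc] at hp ⊢
    omega
  · rintro ⟨j, i⟩ hp
    simp only [Finset.mem_sigma, Finset.mem_Icc] at hp ⊢
    omega
  · rintro ⟨j, i⟩ hp
    simp only
    congr 1 <;> omega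
  · rintro ⟨j, i⟩ hp
    simp only
    congr 1 <;> omega
  · rintro ⟨j, i⟩ hp
    simp only
    have h2 : ((k + a + 1 - i : ℤ) : ℝ) - ((k + a + 1 - j : ℤ) : ℝ) + 1
        = (j : ℝ) - (i : ℝ) + 1 := by push_cast; ring
    have h3 : (k + a + 1 - j : ℤ) - (k + a + 1 - i) = i - j := by ring
    have h4 : k + a + 1 - (k + a + 1 - i) = i := by ring
    rw [h2, h3, h4]
    ring
end
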